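/- arXiv:1208.5007 — 4 statements merged into one kernel-verified Lean document; each statement's English description precedes it below -/
import Mathlib

section
/- A nonzero rational number q is a square in ℚ if and only if q is a square in ℝ and, for every prime p, the image of q in ℚ_[p] is a square in ℚ_[p]. -/
lemma nat_isSquare_of_even_factorization {n : ℕ} (hn : n ≠ 0)
    (h : ∀ p, Even (n.factorization p)) : IsSquare n := by
  refine ⟨n.factorization.prod fun p k => p ^ (k / 2), ?_⟩
  conv_lhs => rw [← Nat.factorization_prod_pow_eq_self hn]
  rw [Finsupp.prod, Finsupp.prod, ← Finset.prod_mul_distrib]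
  refine Finset.prod_congr rfl fun p hp => ?_
  rw [← pow_add]
  congr 1
  obtain ⟨k, hk⟩ := h p
  omega

/-- A nonzero rational is a square iff it is a square in `ℝ` and in every `ℚ_[p]`. -/
theorem rat_isSquare_iff_real_and_padic (q : ℚ) (hq : q ≠ 0) :
    IsSquare q ↔
      IsSquare (q : ℝ) ∧ ∀ (p : ℕ) [Fact p.Prime], IsSquare (q : ℚ_[p]) := by
  constructor
  · rintro ⟨t, rfl⟩
    exact ⟨⟨t, by push_cast; ring⟩, fun p _ => ⟨t, by push_cast; ring⟩⟩
  · rintro ⟨⟨t, ht⟩, hpad⟩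
    -- q is positive
    have hq0 : 0 < q := by
      have ht0 : t ≠ 0 := by
        rintro rfl
        exact hq (by exact_mod_cast ht.trans (mul_zero 0))
      have : (0 : ℝ) < q := ht ▸ mul_self_pos.mpr ht0
      exact_mod_cast this
    -- for each prime p, padicValRat p q is even
    have hval : ∀ p : ℕ, p.Prime → Even (padicValRat p q) := by
      intro p hp
      haveI : Fact p.Prime := ⟨hp⟩
      obtain ⟨s, hs⟩ := hpad p
      have hqp : (q : ℚ_[p]) ≠ 0 := by exact_mod_cast hq
      have hs0 : s ≠ 0 := by
        rintro rfl
        exact hqp (hs.trans (mul_zero 0))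
      have := Padic.valuation_ratCast (p := p) q
      rw [hs, Padic.valuation_mul hs0 hs0] at this
      exact ⟨s.valuation, this.symm⟩
    -- num and den have even factorizations
    have hnum : ∀ p, Even ((q.num.natAbs).factorization p) := by
      intro p
      by_cases hp : p.Prime
      · rw [Nat.factorization_def _ hp]
        by_cases hd : p ∣ q.num.natAbs
        · have hnd : ¬ p ∣ q.den := fun h =>
            Nat.Prime.not_dvd_one hp (q.reduced ▸ Nat.dvd_gcd hd h)
          have hden0 : padicValNat p q.den = 0 := padicValNat.eq_zero_of_not_dvd hnd
          have := hval p hp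
          rw [padicValRat_def, hden0, Nat.cast_zero, sub_zero, padicValInt] at this
          obtain ⟨k, hk⟩ := this
          exact ⟨k.toNat, by omega⟩
        · simp [padicValNat.eq_zero_of_not_dvd hd]
      · simp [Nat.factorization_eq_zero_of_not_prime _ hp]
    have hden : ∀ p, Even ((q.den).factorization p) := by
      intro p
      by_cases hp : p.Prime
      · rw [Nat.factorization_def _ hp]
        by_cases hd : p ∣ q.den
        · have hnd : ¬ p ∣ q.num.natAbs := fun h =>
            Nat.Prime.not_dvd_one hp (q.reduced ▸ Nat.dvd_gcd h hd)
          have hnum0 : padicValInt p q.num = 0 := by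
            rw [padicValInt]
            exact padicValNat.eq_zero_of_not_dvd hnd
          have := hval p hp
          rw [padicValRat_def, hnum0, Int.natCast_zero, zero_sub] at this
          obtain ⟨k, hk⟩ := this
          exact ⟨(-k).toNat, by omega⟩
        · simp [padicValNat.eq_zero_of_not_dvd hd]
      · simp [Nat.factorization_eq_zero_of_not_prime _ hp]
    obtain ⟨a, ha⟩ := nat_isSquare_of_even_factorization
      (Int.natAbs_ne_zero.mpr (Rat.num_ne_zero.mpr hq)) hnum
    obtain ⟨b, hb⟩ := nat_isSquare_of_even_factorization q.den_nz hden
    refine ⟨(a : ℚ) / b, ?_⟩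
    have hbn : b ≠ 0 := by
      intro h
      exact q.den_nz (by rw [hb, h, mul_zero])
    have hb0 : (b : ℚ) ≠ 0 := Nat.cast_ne_zero.mpr hbn
    have hnum' : (q.num : ℚ) = (a : ℚ) * a := by
      have : q.num.natAbs = a * a := ha
      have habs : (q.num.natAbs : ℤ) = q.num := Int.natAbs_of_nonneg (le_of_lt (Rat.num_pos.mpr hq0))
      rw [← habs, this]
      push_cast
      ring
    have hden' : (q.den : ℚ) = (b : ℚ) * b := by exact_mod_cast hb
    rw [div_mul_div_comm, ← hnum', ← hden', Rat.num_div_den]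
end

section
/- Let a and b be nonzero rational numbers. If the equation z² = a·x² + b·y² has a nontrivial solution over ℝ and has a nontrivial solution over ℚ_[p] for every prime p, then it has a nontrivial rational solution (x,y,z) ∈ ℚ³ with (x,y,z) ≠ (0,0,0). -/
/-- Solvability predicate for `z² = a x² + b y²` with a nontrivial solution. -/
def Sol (K : Type*) [Field K] (a b : K) : Prop :=
  ∃ x y z : K, (x, y, z) ≠ (0, 0, 0) ∧ z ^ 2 = a * x ^ 2 + b * y ^ 2

section FieldLemmas

variable {K : Type*} [Field K]

lemma triv_ne {x y z : K} (h : ¬(x = 0 ∧ y = 0 ∧ z = 0)) : (x, y, z) ≠ (0, 0, 0) := by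
  intro he
  exact h (by simpa [Prod.ext_iff] using he)

lemma ne_triv {x y z : K} (h : (x, y, z) ≠ (0, 0, 0)) : ¬(x = 0 ∧ y = 0 ∧ z = 0) := by
  rintro ⟨h1, h2, h3⟩
  exact h (by simp [h1, h2, h3])

lemma sol_symm {a b : K} (h : Sol K a b) : Sol K b a := by
  obtain ⟨x, y, z, hnt, he⟩ := h
  refine ⟨y, x, z, ?_, by rw [he]; ring⟩
  have := ne_triv hnt
  exact triv_ne (by tauto)

lemma sol_of_sq {a : K} (b : K) (s : K) (hs : a = s ^ 2) : Sol K a b :=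
  ⟨1, 0, s, by simp, by rw [hs]; ring⟩

lemma sol_iff {a b : K} : Sol K a b ↔ (∃ s, a = s ^ 2) ∨ (∃ u v, b = u ^ 2 - a * v ^ 2) := by
  constructor
  · rintro ⟨x, y, z, hnt, he⟩
    have hnt' := ne_triv hnt
    by_cases hy : y = 0
    · subst hy
      have hx : x ≠ 0 := by
        intro hx
        subst hx
        have hz : z = 0 := by
          have : z ^ 2 = 0 := by rw [he]; ring
          exact pow_eq_zero_iff (n := 2) (by norm_num) |>.mp this
        tauto
      left
      refine ⟨z / x, ?_⟩
      rw [div_pow, eq_div_iff (pow_ne_zero _ hx)]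
      linear_combination (-1 : K) * he
    · right
      refine ⟨z / y, x / y, ?_⟩
      rw [div_pow, div_pow, ← mul_div_assoc, div_sub_div_same,
        eq_div_iff (pow_ne_zero _ hy)]
      linear_combination (-1 : K) * he
  · rintro (⟨s, hs⟩ | ⟨u, v, huv⟩)
    · exact sol_of_sq b s hs
    · exact ⟨v, 1, u, triv_ne (by simp), by rw [huv]; ring⟩

lemma sol_transfer {a b b' c t : K} (hb : b ≠ 0) (hc : c ≠ 0)
    (h : t ^ 2 - a = b * b' * c ^ 2) (hs : Sol K a b) : Sol K a b' := by
  rcases sol_iff.mp hs with hsq | ⟨u, v, huv⟩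
  · obtain ⟨s, hsq⟩ := hsq
    exact sol_of_sq b' s hsq
  · refine sol_iff.mpr (Or.inr ⟨(t * u + a * v) / (b * c), (t * v + u) / (b * c), ?_⟩)
    rw [div_pow, div_pow, ← mul_div_assoc, div_sub_div_same,
      eq_div_iff (pow_ne_zero _ (mul_ne_zero hb hc))]
    linear_combination (-b) * h + (t ^ 2 - a) * huv

lemma sol_mul_sq {a b : K} (s : K) (hs : s ≠ 0) (h : Sol K a (b * s ^ 2)) : Sol K a b := by
  obtain ⟨x, y, z, hnt, he⟩ := h
  refine ⟨x, s * y, z, ?_, by rw [he]; ring⟩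
  have hh := ne_triv hnt
  refine triv_ne ?_
  rintro ⟨h1, h2, h3⟩
  apply hh
  refine ⟨h1, ?_, h3⟩
  rcases mul_eq_zero.mp h2 with h' | h'
  · exact absurd h' hs
  · exact h'

lemma sol_mul_sq' {a b : K} (s : K) (hs : s ≠ 0) (h : Sol K (a * s ^ 2) b) : Sol K a b :=
  sol_symm (sol_mul_sq s hs (sol_symm h))

end FieldLemmas

section Padic

variable {p : ℕ} [hp : Fact p.Prime]

lemma padic_one_lt : (1 : ℝ) < (p : ℝ) := by exact_mod_cast hp.out.one_lt

lemma padic_zero_lt : (0 : ℝ) < (p : ℝ) := by linarith [padic_one_lt (p := p)]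

lemma padic_norm_sq_ne {w : ℚ_[p]} (hw : w ≠ 0) (k : ℤ) :
    ‖w‖ ^ 2 ≠ (p : ℝ) ^ (2 * k + 1) := by
  intro h
  rw [Padic.norm_eq_zpow_neg_valuation hw, ← zpow_natCast ((p : ℝ) ^ (-w.valuation)) 2,
    ← zpow_mul] at h
  have := zpow_right_injective₀ (a := (p : ℝ)) (padic_zero_lt (p := p))
    (padic_one_lt (p := p)).ne' h
  omega

lemma padic_norm_int_eq_one {a : ℤ} (hpa : ¬(p : ℤ) ∣ a) : ‖(a : ℚ_[p])‖ = 1 := by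
  refine le_antisymm (Padic.norm_int_le_one a) (not_lt.mp ?_)
  rw [Padic.norm_intCast_lt_one_iff]
  exact hpa

lemma padic_sq_mod {a b : ℤ} (hpa : ¬(p : ℤ) ∣ a) (hpb : (p : ℤ) ∣ b)
    (hb2 : ¬((p : ℤ) * p ∣ b)) (hs : Sol ℚ_[p] (a : ℚ_[p]) (b : ℚ_[p])) :
    IsSquare (a : ZMod p) := by
  obtain ⟨b₁, rfl⟩ := hpb
  have hpb₁ : ¬(p : ℤ) ∣ b₁ := fun h => hb2 (mul_dvd_mul_left _ h)
  have hb₁ : b₁ ≠ 0 := fun h => hpb₁ (h ▸ dvd_zero _)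
  have na : ‖(a : ℚ_[p])‖ = 1 := padic_norm_int_eq_one hpa
  have nb : ‖((↑p * b₁ : ℤ) : ℚ_[p])‖ = (p : ℝ)⁻¹ := by
    push_cast
    rw [norm_mul, Padic.norm_p, padic_norm_int_eq_one hpb₁, mul_one]
  have hbK : ((↑p * b₁ : ℤ) : ℚ_[p]) ≠ 0 := by
    rw [Int.cast_ne_zero]
    exact mul_ne_zero (by exact_mod_cast hp.out.ne_zero) hb₁
  obtain ⟨x, y, z, hnt, he⟩ := hs
  have hnt' := ne_triv hnt
  -- x ≠ 0
  have hx : x ≠ 0 := by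
    intro hx0
    subst hx0
    have hy : y ≠ 0 := by
      intro hy0
      subst hy0
      have hz : z = 0 := by
        have : z ^ 2 = 0 := by rw [he]; ring
        exact pow_eq_zero_iff (n := 2) (by norm_num) |>.mp this
      tauto
    have hz : z ≠ 0 := by
      intro hz0
      subst hz0
      apply hbK
      have : ((↑p * b₁ : ℤ) : ℚ_[p]) * y ^ 2 = 0 := by linear_combination -he
      rcases mul_eq_zero.mp this with h | h
      · exact h
      · exact absurd (pow_eq_zero_iff (n := 2) (by norm_num) |>.mp h) hy
    have hqe : (z / y) ^ 2 = ((↑p * b₁ : ℤ) : ℚ_[p]) := by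
      rw [div_pow, div_eq_iff (pow_ne_zero _ hy)]
      linear_combination he
    refine padic_norm_sq_ne (div_ne_zero hz hy) (-1) ?_
    rw [← norm_pow, hqe, nb]
    norm_num
  -- normalize
  set u := z / x with hu_def
  set w := y / x with hw_def
  have hu : u ^ 2 = (a : ℚ_[p]) + ((↑p * b₁ : ℤ) : ℚ_[p]) * w ^ 2 := by
    rw [hu_def, hw_def]
    have he' := he
    field_simp
    push_cast at he' ⊢
    linear_combination he'
  -- ‖w‖ ≤ 1
  have hwle : ‖w‖ ≤ 1 := by
    by_contra hgt
    push_neg at hgt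
    have hwne : w ≠ 0 := by
      intro h; rw [h, norm_zero] at hgt; linarith
    have hk : ‖w‖ = (p : ℝ) ^ (-w.valuation) := Padic.norm_eq_zpow_neg_valuation hwne
    set k : ℤ := -w.valuation with hk_def
    have hkpos : 0 < k := by
      by_contra hk0
      push_neg at hk0
      have := zpow_le_one_of_nonpos₀ (le_of_lt (padic_one_lt (p := p))) hk0
      rw [← hk] at this
      linarith
    have hbw : ‖((↑p * b₁ : ℤ) : ℚ_[p]) * w ^ 2‖ = (p : ℝ) ^ (2 * (k - 1) + 1) := by
      rw [norm_mul, nb, norm_pow, hk, ← zpow_natCast ((p : ℝ) ^ k) 2, ← zpow_mul]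
      rw [← zpow_neg_one]
      rw [← zpow_add₀ (padic_zero_lt (p := p)).ne']
      ring_nf
    have hbwgt : 1 < ‖((↑p * b₁ : ℤ) : ℚ_[p]) * w ^ 2‖ := by
      rw [hbw]
      exact one_lt_zpow₀ (padic_one_lt (p := p)) (by omega)
    have hne : ‖(a : ℚ_[p])‖ ≠ ‖((↑p * b₁ : ℤ) : ℚ_[p]) * w ^ 2‖ := by
      rw [na]; exact ne_of_lt hbwgt
    have husq : ‖u‖ ^ 2 = (p : ℝ) ^ (2 * (k - 1) + 1) := by
      rw [← norm_pow, hu, Padic.add_eq_max_of_ne hne, na,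
        max_eq_right (le_of_lt hbwgt), hbw]
    have hune : u ≠ 0 := by
      intro h
      rw [h, norm_zero] at husq
      have h0 : (0 : ℝ) < (p : ℝ) ^ (2 * (k - 1) + 1) := zpow_pos (padic_zero_lt (p := p)) _
      simp at husq
      linarith [husq, h0]
    exact padic_norm_sq_ne hune (k - 1) husq
  -- ‖bw²‖ < 1 and ‖u‖ = 1
  have hbwlt : ‖((↑p * b₁ : ℤ) : ℚ_[p]) * w ^ 2‖ ≤ (p : ℝ)⁻¹ := by
    rw [norm_mul, nb, norm_pow]
    calc (p : ℝ)⁻¹ * ‖w‖ ^ 2 ≤ (p : ℝ)⁻¹ * 1 := by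
          apply mul_le_mul_of_nonneg_left _ (by positivity)
          nlinarith [norm_nonneg w]
      _ = (p : ℝ)⁻¹ := mul_one _
  have hpinv : (p : ℝ)⁻¹ < 1 := inv_lt_one_of_one_lt₀ (padic_one_lt (p := p))
  have hbwlt1 : ‖((↑p * b₁ : ℤ) : ℚ_[p]) * w ^ 2‖ < 1 := lt_of_le_of_lt hbwlt hpinv
  have hune : ‖u‖ = 1 := by
    have husq : ‖u‖ ^ 2 = 1 := by
      rw [← norm_pow, hu, Padic.add_eq_max_of_ne (by rw [na]; linarith), na,
        max_eq_left (le_of_lt hbwlt1)]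
    have h' : (‖u‖ - 1) * (‖u‖ + 1) = 0 := by linear_combination husq
    rcases mul_eq_zero.mp h' with h'' | h''
    · linarith
    · linarith [norm_nonneg u]
  -- pass to ℤ_p and ZMod p
  set U : ℤ_[p] := ⟨u, le_of_eq hune⟩ with hU
  have hD : ‖(a : ℤ_[p]) - U ^ 2‖ < 1 := by
    have hcoe : (((a : ℤ_[p]) - U ^ 2 : ℤ_[p]) : ℚ_[p]) = (a : ℚ_[p]) - u ^ 2 := by
      push_cast [hU]
      rfl
    rw [PadicInt.norm_def, hcoe,
      show (a : ℚ_[p]) - u ^ 2 = -(((↑p * b₁ : ℤ) : ℚ_[p]) * w ^ 2) by linear_combination -hu,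
      norm_neg]
    exact hbwlt1
  have hker : PadicInt.toZMod ((a : ℤ_[p]) - U ^ 2) = 0 := by
    rw [← RingHom.mem_ker, PadicInt.ker_toZMod, IsLocalRing.mem_maximalIdeal, PadicInt.mem_nonunits]
    exact hD
  rw [map_sub, map_pow, map_intCast, sub_eq_zero] at hker
  exact ⟨PadicInt.toZMod U, by rw [hker]; ring⟩

end Padic

lemma int_sq_mul_squarefree (k : ℤ) (hk : k ≠ 0) :
    ∃ m c : ℤ, Squarefree m ∧ c ≠ 0 ∧ k = m * c ^ 2 := by
  obtain ⟨a₀, c₀, h, hs⟩ := Nat.sq_mul_squarefree k.natAbs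
  have hna : k.natAbs ≠ 0 := Int.natAbs_ne_zero.mpr hk
  have hc0 : c₀ ≠ 0 := by rintro rfl; simp at h; omega
  have hsa : Squarefree ((a₀ : ℕ) : ℤ) := by
    rw [← Int.squarefree_natAbs, Int.natAbs_natCast]
    exact hs
  have hsa' : Squarefree (-((a₀ : ℕ) : ℤ)) := by
    rw [← Int.squarefree_natAbs, Int.natAbs_neg, Int.natAbs_natCast]
    exact hs
  rcases Int.natAbs_eq k with h1 | h1
  · refine ⟨(a₀ : ℤ), (c₀ : ℤ), hsa, by exact_mod_cast hc0, ?_⟩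
    rw [h1, ← h]
    push_cast
    ring
  · refine ⟨-(a₀ : ℤ), (c₀ : ℤ), hsa', by exact_mod_cast hc0, ?_⟩
    rw [h1, ← h]
    push_cast
    ring

lemma sq_residue_two (a : ℤ) : ∃ t : ℤ, (2 : ℤ) ∣ t ^ 2 - a := by
  refine ⟨a, ?_⟩
  obtain ⟨r, hr⟩ := Int.even_mul_succ_self (a - 1)
  exact ⟨r, by linear_combination hr⟩

lemma zmod_square_lift {n : ℕ} [NeZero n] {a : ℤ} (h : IsSquare (a : ZMod n)) :
    ∃ t : ℤ, (n : ℤ) ∣ t ^ 2 - a := by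
  obtain ⟨r, hr⟩ := h
  refine ⟨(r.val : ℤ), ?_⟩
  rw [← ZMod.intCast_zmod_eq_zero_iff_dvd]
  have hcast : (((r.val : ℤ) : ℤ) : ZMod n) = r := by
    push_cast
    exact ZMod.natCast_rightInverse r
  push_cast
  rw [ZMod.natCast_rightInverse r, hr]
  ring

lemma crt_sq (a : ℤ) : ∀ n : ℕ, Squarefree n →
    (∀ q : ℕ, q.Prime → q ∣ n → ∃ t : ℤ, (q : ℤ) ∣ t ^ 2 - a) →
    ∃ t : ℤ, (n : ℤ) ∣ t ^ 2 - a := by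
  intro n
  induction n using Nat.strong_induction_on with
  | _ n ih =>
    intro hsf hall
    have hn0 : n ≠ 0 := hsf.ne_zero
    rcases eq_or_ne n 1 with h1 | h1
    · exact ⟨0, by rw [h1]; exact one_dvd _⟩
    · set q := n.minFac with hq_def
      have hq : q.Prime := Nat.minFac_prime h1
      obtain ⟨m, hm⟩ := Nat.minFac_dvd n
      have hm0 : m ≠ 0 := by rintro rfl; exact hn0 (by omega)
      have hqm : ¬q ∣ m := by
        intro hdvd
        refine (Nat.Prime.one_lt hq).ne' (Nat.isUnit_iff.mp (hsf q ?_))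
        obtain ⟨m', rfl⟩ := hdvd
        exact ⟨m', by rw [hm]; ring⟩
      have hcop : Nat.Coprime q m := (Nat.Prime.coprime_iff_not_dvd hq).mpr hqm
      have hmlt : m < n := by
        calc m = 1 * m := (one_mul m).symm
        _ < q * m := (Nat.mul_lt_mul_right (Nat.pos_of_ne_zero hm0)).mpr hq.one_lt
        _ = n := hm.symm
      have hsfm : Squarefree m := hsf.squarefree_of_dvd ⟨q, by rw [hm]; ring⟩
      obtain ⟨t₂, ht₂⟩ := ih m hmlt hsfm
        (fun r hr hrd => hall r hr (hrd.trans ⟨q, by rw [hm]; ring⟩))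
      obtain ⟨t₁, ht₁⟩ := hall q hq (Nat.minFac_dvd n)
      have hcopZ : IsCoprime (q : ℤ) (m : ℤ) := by
        rw [Int.isCoprime_iff_gcd_eq_one]
        exact_mod_cast hcop
      obtain ⟨u, v, huv⟩ := hcopZ
      set T := t₂ * (u * q) + t₁ * (v * m) with hT
      have hTq : (q : ℤ) ∣ T - t₁ := ⟨t₂ * u - t₁ * u, by rw [hT]; linear_combination t₁ * huv⟩
      have hTm : (m : ℤ) ∣ T - t₂ := ⟨t₁ * v - t₂ * v, by rw [hT]; linear_combination t₂ * huv⟩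
      have hq1 : (q : ℤ) ∣ T ^ 2 - a := by
        obtain ⟨d, hd⟩ := hTq
        obtain ⟨e, he⟩ := ht₁
        exact ⟨d * (T + t₁) + e, by linear_combination (T + t₁) * hd + he⟩
      have hm1 : (m : ℤ) ∣ T ^ 2 - a := by
        obtain ⟨d, hd⟩ := hTm
        obtain ⟨e, he⟩ := ht₂
        exact ⟨d * (T + t₂) + e, by linear_combination (T + t₂) * hd + he⟩
      refine ⟨T, ?_⟩
      rw [hm]
      push_cast
      exact (IsCoprime.mul_dvd ⟨u, v, huv⟩ hq1 hm1)

lemma sol_mul_sq_rev {K : Type*} [Field K] {a b : K} (s : K) (hs : s ≠ 0) (h : Sol K a b) :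
    Sol K a (b * s ^ 2) := by
  apply sol_mul_sq s⁻¹ (inv_ne_zero hs)
  have he : b * s ^ 2 * s⁻¹ ^ 2 = b := by field_simp
  rwa [he]

lemma sol_mul_sq_rev' {K : Type*} [Field K] {a b : K} (s : K) (hs : s ≠ 0) (h : Sol K a b) :
    Sol K (a * s ^ 2) b :=
  sol_symm (sol_mul_sq_rev s hs (sol_symm h))

lemma rat_decomp (q : ℚ) (hq : q ≠ 0) :
    ∃ (n : ℤ) (s : ℚ), Squarefree n ∧ s ≠ 0 ∧ q = (n : ℚ) * s ^ 2 := by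
  have hden : ((q.den : ℤ) : ℚ) ≠ 0 := by
    exact_mod_cast (Nat.cast_ne_zero (R := ℚ)).mpr q.den_nz
  have hk : q.num * (q.den : ℤ) ≠ 0 :=
    mul_ne_zero (Rat.num_ne_zero.mpr hq) (by exact_mod_cast q.den_nz)
  obtain ⟨m, c, hm, hc, hkm⟩ := int_sq_mul_squarefree _ hk
  refine ⟨m, (c : ℚ) / ((q.den : ℤ) : ℚ), hm, div_ne_zero (by exact_mod_cast hc) hden, ?_⟩
  rw [div_pow, ← mul_div_assoc, eq_div_iff (pow_ne_zero _ hden)]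
  have h2 : q * ((q.den : ℤ) : ℚ) = (q.num : ℚ) := by
    push_cast
    rw [mul_comm]
    exact_mod_cast Rat.den_mul_eq_num q
  have hkm' : (q.num : ℚ) * ((q.den : ℤ) : ℚ) = (m : ℚ) * (c : ℚ) ^ 2 := by
    exact_mod_cast hkm
  linear_combination ((q.den : ℤ) : ℚ) * h2 + hkm'

theorem key : ∀ n : ℕ, ∀ a b : ℤ, Squarefree a → Squarefree b → a.natAbs ≤ b.natAbs →
    a.natAbs + b.natAbs ≤ n →
    Sol ℝ (a : ℝ) (b : ℝ) →
    (∀ (p : ℕ) [Fact p.Prime], Sol ℚ_[p] (a : ℚ_[p]) (b : ℚ_[p])) →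
    Sol ℚ (a : ℚ) (b : ℚ) := by
  intro n
  induction n with
  | zero =>
    intro a b hsa hsb _ hsum _ _
    have h1 : a ≠ 0 := hsa.ne_zero
    have h2 : a.natAbs ≠ 0 := Int.natAbs_ne_zero.mpr h1
    omega
  | succ n ih =>
    intro a b hsa hsb hab hsum hR hQp
    have ha0 : a ≠ 0 := hsa.ne_zero
    have hb0 : b ≠ 0 := hsb.ne_zero
    have ha1 : 1 ≤ a.natAbs := Nat.one_le_iff_ne_zero.mpr (Int.natAbs_ne_zero.mpr ha0)
    by_cases hb1 : b.natAbs = 1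
    · -- base case : b = ±1
      rcases Int.natAbs_eq_iff.mp hb1 with hbv | hbv
    -- b = 1
      · subst hbv
        push_cast
        exact sol_symm (sol_of_sq _ 1 (by norm_num))
      · -- b = -1
        subst hbv
        have ha1' : a.natAbs = 1 := by omega
        rcases Int.natAbs_eq_iff.mp ha1' with hav | hav
        · subst hav
          push_cast
          exact sol_of_sq _ 1 (by norm_num)
        · -- a = -1, b = -1 : contradiction with real solvability
          exfalso
          subst hav
          obtain ⟨x, y, z, hnt, he⟩ := hR
          push_cast at he
          have hnt' := ne_triv hnt
          have hx : x = 0 := by nlinarith [sq_nonneg x, sq_nonneg y, sq_nonneg z]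
          have hy : y = 0 := by nlinarith [sq_nonneg x, sq_nonneg y, sq_nonneg z]
          have hz : z = 0 := by nlinarith [sq_nonneg x, sq_nonneg y, sq_nonneg z]
          exact hnt' ⟨hx, hy, hz⟩
    · -- inductive descent
      have hb2 : 2 ≤ b.natAbs := by omega
      have hper : ∀ q : ℕ, q.Prime → q ∣ b.natAbs → ∃ t : ℤ, (q : ℤ) ∣ t ^ 2 - a := by
        intro q hq hqb
        by_cases hq2 : q = 2
        · subst hq2; exact sq_residue_two a
        · by_cases hqa : (q : ℤ) ∣ a
          · obtain ⟨d, hd⟩ := hqa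
            exact ⟨0, ⟨-d, by linear_combination -hd⟩⟩
          · haveI : Fact q.Prime := ⟨hq⟩
            have hqbZ : (q : ℤ) ∣ b := Int.dvd_natAbs.mp (by exact_mod_cast hqb)
            have hq2b : ¬((q : ℤ) * q ∣ b) := by
              intro hdvd
              have hu := hsb (q : ℤ) hdvd
              rw [Int.isUnit_iff] at hu
              rcases hu with h | h <;> [skip; skip] <;>
                · have := hq.two_le; omega
            exact zmod_square_lift (padic_sq_mod hqa hqbZ hq2b (hQp q))
      obtain ⟨t₀, ht₀⟩ := crt_sq a b.natAbs (Int.squarefree_natAbs.mpr hsb) hper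
      set B : ℤ := (b.natAbs : ℤ) with hB
      have hB2 : 2 ≤ B := by rw [hB]; exact_mod_cast hb2
      have hB0 : 0 < B := by omega
      -- find small representative t
      set r := t₀ % B with hr_def
      have hr0 : 0 ≤ r := Int.emod_nonneg t₀ (by omega)
      have hrB : r < B := Int.emod_lt_of_pos t₀ hB0
      have hrc : B ∣ t₀ - r := ⟨t₀ / B, by rw [hr_def, Int.emod_def]; ring⟩
      set t : ℤ := if 2 * r ≤ B then r else r - B with ht_def
      have hcong : B ∣ t₀ - t := by
        rw [ht_def]
        split
        · exact hrc
        · obtain ⟨d, hd⟩ := hrc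
          exact ⟨d + 1, by linear_combination hd⟩
      have hsize : 2 * |t| ≤ B := by
        rw [ht_def]
        split
        · rw [abs_of_nonneg hr0]; omega
        · rw [abs_of_nonpos (by omega)]; omega
      have hdvdB : B ∣ t ^ 2 - a := by
        obtain ⟨d, hd⟩ := hcong
        obtain ⟨e, he⟩ := ht₀
        exact ⟨e - d * (t₀ + t), by linear_combination he - (t₀ + t) * hd⟩
      by_cases hteq : t ^ 2 - a = 0
      · exact sol_of_sq _ (t : ℚ) (by exact_mod_cast (by omega : a = t ^ 2))
      · have hdvdb : b ∣ t ^ 2 - a := by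
          rwa [hB, ← Int.abs_eq_natAbs, abs_dvd] at hdvdB
        obtain ⟨m, hm2⟩ := hdvdb
        have hm0 : m ≠ 0 := by
          rintro rfl
          exact hteq (by omega)
        obtain ⟨b', c, hsb', hc0, hmc⟩ := int_sq_mul_squarefree m hm0
        have hb'0 : b' ≠ 0 := hsb'.ne_zero
        have hmain : t ^ 2 - a = b * b' * c ^ 2 := by rw [hm2, hmc]; ring
        -- size bound
        have habsb : |b| = B := by rw [hB, Int.abs_eq_natAbs]
        have h1 : B * |m| = |t ^ 2 - a| := by
          rw [hm2, abs_mul, habsb]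
        have h2 : |t ^ 2 - a| ≤ t ^ 2 + |a| := by
          calc |t ^ 2 - a| ≤ |t ^ 2| + |a| := abs_sub _ _
            _ = t ^ 2 + |a| := by rw [abs_of_nonneg (sq_nonneg t)]
        have h3 : |a| ≤ B := by
          rw [Int.abs_eq_natAbs, hB]
          exact_mod_cast hab
        have h4 : 4 * t ^ 2 ≤ B ^ 2 := by nlinarith [hsize, abs_nonneg t, sq_abs t]
        have hmB : |m| < B := by nlinarith [h1, h2, h3, h4, abs_nonneg m]
        have hc1 : 1 ≤ c ^ 2 := by
          have := Int.one_le_abs hc0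
          nlinarith [sq_abs c]
        have hb'B : |b'| < B := by
          have hmabs : |m| = |b'| * c ^ 2 := by
            rw [hmc, abs_mul, abs_of_nonneg (sq_nonneg c)]
          nlinarith [abs_nonneg b']
        have hb'nat : b'.natAbs < b.natAbs := by
          have : (b'.natAbs : ℤ) < (b.natAbs : ℤ) := by
            rw [← Int.abs_eq_natAbs, ← Int.abs_eq_natAbs]
            exact lt_of_lt_of_le hb'B (le_of_eq habsb.symm)
          exact_mod_cast this
        -- transfer local solvability to (a, b')
        have hbR : ((b : ℤ) : ℝ) ≠ 0 := Int.cast_ne_zero.mpr hb0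
        have hcR : ((c : ℤ) : ℝ) ≠ 0 := Int.cast_ne_zero.mpr hc0
        have hmainR : (t : ℝ) ^ 2 - (a : ℝ) = (b : ℝ) * (b' : ℝ) * (c : ℝ) ^ 2 := by
          exact_mod_cast congrArg (fun z : ℤ => (z : ℝ)) hmain
        have hR' : Sol ℝ (a : ℝ) (b' : ℝ) :=
          sol_transfer hbR hcR hmainR hR
        have hQp' : ∀ (p : ℕ) [Fact p.Prime], Sol ℚ_[p] (a : ℚ_[p]) (b' : ℚ_[p]) := by
          intro p _
          have hmainP : (t : ℚ_[p]) ^ 2 - (a : ℚ_[p]) = (b : ℚ_[p]) * (b' : ℚ_[p]) * (c : ℚ_[p]) ^ 2 := by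
            exact_mod_cast congrArg (fun z : ℤ => (z : ℚ_[p])) hmain
          exact sol_transfer (Int.cast_ne_zero.mpr hb0) (Int.cast_ne_zero.mpr hc0)
            hmainP (hQp p)
        -- recursive call
        have hsolb' : Sol ℚ (a : ℚ) (b' : ℚ) := by
          rcases le_or_gt a.natAbs b'.natAbs with hord | hord
          · exact ih a b' hsa hsb' hord (by omega) hR' hQp'
          · exact sol_symm (ih b' a hsb' hsa (le_of_lt hord) (by omega) (sol_symm hR')
              (fun p _ => sol_symm (hQp' p)))
        -- transfer back over ℚ
        have hmain' : (t : ℚ) ^ 2 - (a : ℚ) = (b' : ℚ) * (b : ℚ) * (c : ℚ) ^ 2 := by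
          have : t ^ 2 - a = b' * b * c ^ 2 := by rw [hmain]; ring
          exact_mod_cast this
        exact sol_transfer (Int.cast_ne_zero.mpr hb'0) (Int.cast_ne_zero.mpr hc0) hmain' hsolb'

lemma sol_cast_down {K : Type*} [Field K] [CharZero K] {na nb : ℤ} {sa sb : ℚ}
    (hsa0 : sa ≠ 0) (hsb0 : sb ≠ 0)
    (h : Sol K ((((na : ℚ) * sa ^ 2 : ℚ)) : K) ((((nb : ℚ) * sb ^ 2 : ℚ)) : K)) :
    Sol K (na : K) (nb : K) := by
  have h1 : ((((na : ℚ) * sa ^ 2 : ℚ)) : K) = (na : K) * ((sa : K)) ^ 2 := by push_cast; ring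
  have h2 : ((((nb : ℚ) * sb ^ 2 : ℚ)) : K) = (nb : K) * ((sb : K)) ^ 2 := by push_cast; ring
  rw [h1, h2] at h
  exact sol_mul_sq (sb : K) (Rat.cast_ne_zero.mpr hsb0)
    (sol_mul_sq' (sa : K) (Rat.cast_ne_zero.mpr hsa0) h)

/-- Hasse–Minkowski for diagonal ternary quadratic forms over `ℚ`. -/
theorem hasse_minkowski_ternary (a b : ℚ) (ha : a ≠ 0) (hb : b ≠ 0)
    (hR : ∃ x y z : ℝ, (x, y, z) ≠ (0, 0, 0) ∧ z ^ 2 = (a : ℝ) * x ^ 2 + (b : ℝ) * y ^ 2)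
    (hQp : ∀ (p : ℕ) [Fact p.Prime],
      ∃ x y z : ℚ_[p], (x, y, z) ≠ (0, 0, 0) ∧ z ^ 2 = (a : ℚ_[p]) * x ^ 2 + (b : ℚ_[p]) * y ^ 2) :
    ∃ x y z : ℚ, (x, y, z) ≠ (0, 0, 0) ∧ z ^ 2 = a * x ^ 2 + b * y ^ 2 := by
  obtain ⟨na, sa, hsa, hsa0, haeq⟩ := rat_decomp a ha
  obtain ⟨nb, sb, hsb, hsb0, hbeq⟩ := rat_decomp b hb
  have hR' : Sol ℝ (na : ℝ) (nb : ℝ) :=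
    sol_cast_down hsa0 hsb0 (by rw [← haeq, ← hbeq]; exact hR)
  have hQp' : ∀ (p : ℕ) [Fact p.Prime], Sol ℚ_[p] (na : ℚ_[p]) (nb : ℚ_[p]) := by
    intro p _
    exact sol_cast_down hsa0 hsb0 (by rw [← haeq, ← hbeq]; exact hQp p)
  have hsol : Sol ℚ (na : ℚ) (nb : ℚ) := by
    rcases le_or_gt na.natAbs nb.natAbs with hord | hord
    · exact key (na.natAbs + nb.natAbs) na nb hsa hsb hord le_rfl hR' hQp'
    · exact sol_symm (key (nb.natAbs + na.natAbs) nb na hsb hsa (le_of_lt hord) le_rfl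
        (sol_symm hR') (fun p _ => sol_symm (hQp' p)))
  have : Sol ℚ a b := by
    rw [haeq, hbeq]
    exact sol_mul_sq_rev sb hsb0 (sol_mul_sq_rev' sa hsa0 hsol)
  exact this
end

section
/- A unit u of the 2-adic integers ℤ_[2] is a square in ℚ_[2] if and only if u ≡ 1 (mod 8), i.e., u − 1 ∈ 8·ℤ_[2]. -/
open Polynomial

private lemma zmod8_unit_sq (x : ZMod (2 ^ 3)) (hx : IsUnit x) : x ^ 2 = 1 := by
  revert hx; revert x; decide

/-- A unit of `ℤ_[2]` is a square in `ℚ_[2]` iff it is congruent to `1` mod `8`. -/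
theorem padicInt_two_unit_isSquare_iff (u : ℤ_[2]ˣ) :
    IsSquare (((u : ℤ_[2]) : ℚ_[2])) ↔ ∃ v : ℤ_[2], (u : ℤ_[2]) - 1 = 8 * v := by
  have h8 : (8 : ℤ_[2]) = 2 ^ 3 := by norm_num
  constructor
  · rintro ⟨t, ht⟩
    -- t has norm 1, hence lies in ℤ_[2]
    have hnu : ‖((u : ℤ_[2]) : ℚ_[2])‖ = 1 := by
      rw [PadicInt.padic_norm_e_of_padicInt]
      exact PadicInt.isUnit_iff.mp u.isUnit
    have hnt : ‖t‖ ≤ 1 := by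
      have : ‖t‖ * ‖t‖ = 1 := by rw [← norm_mul, ← ht, hnu]
      nlinarith [norm_nonneg t]
    set t' : ℤ_[2] := ⟨t, hnt⟩ with ht'
    have hut : (u : ℤ_[2]) = t' * t' := by
      apply Subtype.ext
      exact_mod_cast ht
    have hunit : IsUnit t' := isUnit_of_mul_isUnit_left (hut ▸ u.isUnit)
    set φ := (PadicInt.toZModPow 3 : ℤ_[2] →+* ZMod (2 ^ 3)) with hφ
    have hφu : φ ((u : ℤ_[2]) - 1) = 0 := by
      have : φ (u : ℤ_[2]) = φ t' ^ 2 := by rw [hut, map_mul, sq]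
      rw [map_sub, map_one, this, zmod8_unit_sq _ (hunit.map φ), sub_self]
    have hker : (u : ℤ_[2]) - 1 ∈ RingHom.ker φ := hφu
    rw [PadicInt.ker_toZModPow, Ideal.mem_span_singleton] at hker
    obtain ⟨v, hv⟩ := hker
    exact ⟨v, by rw [hv, h8]; push_cast; ring⟩
  · rintro ⟨v, hv⟩
    -- Hensel's lemma for X² - u at a = 1
    set F : Polynomial ℤ_[2] := X ^ 2 - C (u : ℤ_[2]) with hF
    have heval : F.eval 1 = 1 - (u : ℤ_[2]) := by simp [hF]
    have hderiv : F.derivative.eval 1 = 2 := by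
      simp [hF]
      norm_num
    have hnorm : ‖F.eval 1‖ < ‖F.derivative.eval 1‖ ^ 2 := by
      rw [heval, hderiv]
      have h1 : ‖(1 : ℤ_[2]) - (u : ℤ_[2])‖ ≤ (2 : ℝ)⁻¹ ^ 3 := by
        have : (1 : ℤ_[2]) - (u : ℤ_[2]) = 2 ^ 3 * (-v) := by
          rw [← neg_sub ((u : ℤ_[2])) 1, hv, h8]; ring
        rw [this, norm_mul]
        calc ‖(2 : ℤ_[2]) ^ 3‖ * ‖-v‖ ≤ ‖(2 : ℤ_[2]) ^ 3‖ * 1 := by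
              apply mul_le_mul_of_nonneg_left (PadicInt.norm_le_one _) (norm_nonneg _)
          _ = (2 : ℝ)⁻¹ ^ 3 := by
              rw [mul_one, norm_pow]
              have hp : ‖(2 : ℤ_[2])‖ = 2⁻¹ := by exact_mod_cast PadicInt.norm_p (p := 2)
              rw [hp]
      have h2 : ‖(2 : ℤ_[2])‖ ^ 2 = (2 : ℝ)⁻¹ ^ 2 := by
        have hp : ‖(2 : ℤ_[2])‖ = 2⁻¹ := by exact_mod_cast PadicInt.norm_p (p := 2)
        rw [hp]
      rw [h2]
      calc ‖(1 : ℤ_[2]) - (u : ℤ_[2])‖ ≤ (2 : ℝ)⁻¹ ^ 3 := h1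
        _ < (2 : ℝ)⁻¹ ^ 2 := by norm_num
    obtain ⟨z, hz, -⟩ := hensels_lemma hnorm
    have hz' : z ^ 2 = (u : ℤ_[2]) := by
      have := hz
      simp only [hF, map_sub, map_pow, Polynomial.aeval_X, Polynomial.aeval_C,
        Algebra.algebraMap_self, RingHom.id_apply, Polynomial.eval_sub, Polynomial.eval_pow, Polynomial.eval_X,
        Polynomial.eval_C, sub_eq_zero] at this
      exact this
    exact ⟨(z : ℚ_[2]), by rw [← hz']; push_cast; ring⟩
end

section
/- If x, y, z ∈ ℚ_[2] satisfy z² = 2·x² + 5·y², then x = y = z = 0. -/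
open PadicInt

lemma zmod_step_aux : ∀ X Y Z : ZMod (2^3), Z^2 = 2*X^2 + 5*Y^2 →
    (ZMod.castHom (pow_dvd_pow 2 (by norm_num : 1 ≤ 3)) (ZMod (2^1)) X = 0 ∧
     ZMod.castHom (pow_dvd_pow 2 (by norm_num : 1 ≤ 3)) (ZMod (2^1)) Y = 0 ∧
     ZMod.castHom (pow_dvd_pow 2 (by norm_num : 1 ≤ 3)) (ZMod (2^1)) Z = 0) := by decide

lemma dvd_iff_toZModPow_one_aux (X : ℤ_[2]) : 2 ∣ X ↔ PadicInt.toZModPow 1 X = 0 := by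
  rw [← Ideal.mem_span_singleton, ← RingHom.mem_ker, ker_toZModPow, pow_one]; norm_num

lemma padicInt_step_aux (X Y Z : ℤ_[2]) (h : Z^2 = 2*X^2 + 5*Y^2) :
    2 ∣ X ∧ 2 ∣ Y ∧ 2 ∣ Z := by
  have h8 : (toZModPow 3 Z)^2 = 2*(toZModPow 3 X)^2 + 5*(toZModPow 3 Y)^2 := by
    have := congrArg (toZModPow (p := 2) 3) h
    push_cast at this
    simpa [map_ofNat] using this
  have key := zmod_step_aux _ _ _ h8
  have hc : ∀ W : ℤ_[2], ZMod.castHom (pow_dvd_pow 2 (by norm_num : 1 ≤ 3)) (ZMod (2^1))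
      (toZModPow 3 W) = toZModPow 1 W := by
    intro W
    exact RingHom.congr_fun (zmod_cast_comp_toZModPow 1 3 (by norm_num)) W
  rw [hc, hc, hc] at key
  exact ⟨(dvd_iff_toZModPow_one_aux X).2 key.1, (dvd_iff_toZModPow_one_aux Y).2 key.2.1,
    (dvd_iff_toZModPow_one_aux Z).2 key.2.2⟩

lemma padic_zero_of_forall_dvd_aux (X : ℤ_[2]) (h : ∀ n : ℕ, (2:ℤ_[2])^n ∣ X) : X = 0 := by
  by_contra hX
  have hpos : 0 < ‖X‖ := norm_pos_iff.2 hX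
  obtain ⟨n, hn⟩ := exists_pow_lt_of_lt_one hpos (by norm_num : (1/2 : ℝ) < 1)
  have h2 : ‖X‖ ≤ ((2:ℕ):ℝ)^(-(n:ℤ)) := by
    rw [norm_le_pow_iff_mem_span_pow, Ideal.mem_span_singleton]
    exact_mod_cast h n
  push_cast at h2; rw [zpow_neg, zpow_natCast] at h2
  have : ((2:ℝ)^n)⁻¹ = (1/2)^n := by rw [one_div, inv_pow]
  rw [this] at h2
  linarith

lemma padicInt_all_dvd_aux (X Y Z : ℤ_[2]) (h : Z^2 = 2*X^2+5*Y^2) :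
    ∀ n : ℕ, (2:ℤ_[2])^n ∣ X ∧ (2:ℤ_[2])^n ∣ Y ∧ (2:ℤ_[2])^n ∣ Z := by
  intro n
  induction n with
  | zero => simp
  | succ n ih =>
    obtain ⟨⟨X', hX⟩, ⟨Y', hY⟩, ⟨Z', hZ⟩⟩ := ih
    have hcancel : Z'^2 = 2*X'^2 + 5*Y'^2 := by
      have h4 : ((2:ℤ_[2])^n)^2 * Z'^2 = ((2:ℤ_[2])^n)^2 * (2*X'^2 + 5*Y'^2) := by
        rw [hX, hY, hZ] at h; ring_nf at h ⊢; linear_combination h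
      exact mul_left_cancel₀ (pow_ne_zero _ (pow_ne_zero _ two_ne_zero)) h4
    obtain ⟨⟨X'', hX'⟩, ⟨Y'', hY'⟩, ⟨Z'', hZ'⟩⟩ := padicInt_step_aux _ _ _ hcancel
    refine ⟨⟨X'', ?_⟩, ⟨Y'', ?_⟩, ⟨Z'', ?_⟩⟩ <;>
      simp [hX, hY, hZ, hX', hY', hZ', pow_succ] <;> ring

lemma padicInt_sol_aux (X Y Z : ℤ_[2]) (h : Z^2 = 2*X^2+5*Y^2) :
    X = 0 ∧ Y = 0 ∧ Z = 0 := by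
  have := padicInt_all_dvd_aux X Y Z h
  exact ⟨padic_zero_of_forall_dvd_aux X fun n => (this n).1,
    padic_zero_of_forall_dvd_aux Y fun n => (this n).2.1,
    padic_zero_of_forall_dvd_aux Z fun n => (this n).2.2⟩

/-- The form `z² = 2x² + 5y²` has only the trivial solution over `ℚ_[2]`,
i.e. the Hilbert symbol `(2,5)₂ = -1`. -/
theorem padic_two_hilbert_two_five (x y z : ℚ_[2])
    (h : z ^ 2 = 2 * x ^ 2 + 5 * y ^ 2) : x = 0 ∧ y = 0 ∧ z = 0 := by
  obtain ⟨n, hn⟩ := exists_nat_gt (max (max ‖x‖ ‖y‖) ‖z‖)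
  have hpow : (n : ℝ) ≤ 2^n := by exact_mod_cast Nat.le_of_lt (Nat.lt_two_pow_self (n := n))
  have hbound : ∀ w : ℚ_[2], ‖w‖ ≤ 2^n → ‖(2:ℚ_[2])^n * w‖ ≤ 1 := by
    intro w hw
    have h2 : ‖(2:ℚ_[2])‖ = 2⁻¹ := by
      have := Padic.norm_p (p := 2); exact_mod_cast this
    rw [_root_.norm_mul, _root_.norm_pow, h2]
    calc (2⁻¹:ℝ)^n * ‖w‖ ≤ (2⁻¹)^n * 2^n := by
          apply mul_le_mul_of_nonneg_left hw; positivity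
      _ = 1 := by rw [← mul_pow]; norm_num
  have hx1 : ‖(2:ℚ_[2])^n * x‖ ≤ 1 := hbound x <| le_trans
    (le_trans (le_max_left _ _) (le_max_left _ _)) (le_trans hn.le hpow)
  have hy1 : ‖(2:ℚ_[2])^n * y‖ ≤ 1 := hbound y <| le_trans
    (le_trans (le_max_right _ _) (le_max_left _ _)) (le_trans hn.le hpow)
  have hz1 : ‖(2:ℚ_[2])^n * z‖ ≤ 1 := hbound z <| le_trans
    (le_max_right _ _) (le_trans hn.le hpow)
  set X : ℤ_[2] := ⟨(2:ℚ_[2])^n * x, hx1⟩ with hXdef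
  set Y : ℤ_[2] := ⟨(2:ℚ_[2])^n * y, hy1⟩ with hYdef
  set Z : ℤ_[2] := ⟨(2:ℚ_[2])^n * z, hz1⟩ with hZdef
  have heq : Z^2 = 2*X^2 + 5*Y^2 := by
    apply Subtype.ext
    push_cast [hXdef, hYdef, hZdef, PadicInt.coe_pow]
    have c2 : ((2:ℤ_[2]):ℚ_[2]) = 2 := rfl
    have c5 : ((5:ℤ_[2]):ℚ_[2]) = 5 := rfl
    rw [c2, c5]
    show ((2:ℚ_[2])^n * z)^2 = 2 * ((2:ℚ_[2])^n * x)^2 + 5 * ((2:ℚ_[2])^n * y)^2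
    linear_combination ((2:ℚ_[2])^n)^2 * h
  obtain ⟨hX0, hY0, hZ0⟩ := padicInt_sol_aux X Y Z heq
  have h2n : (2:ℚ_[2])^n ≠ 0 := pow_ne_zero _ two_ne_zero
  refine ⟨?_, ?_, ?_⟩
  · have : (2:ℚ_[2])^n * x = 0 := congrArg Subtype.val hX0
    exact (mul_eq_zero.1 this).resolve_left h2n
  · have : (2:ℚ_[2])^n * y = 0 := congrArg Subtype.val hY0
    exact (mul_eq_zero.1 this).resolve_left h2n
  · have : (2:ℚ_[2])^n * z = 0 := congrArg Subtype.val hZ0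
    exact (mul_eq_zero.1 this).resolve_left h2n
end
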